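/- Let L be an n×n real symmetric positive semidefinite matrix and K = L(L+I)⁻¹. Then the expected cardinality of a subset drawn from the L-ensemble equals the trace of K: Σ_{Y ⊆ {1,…,n}} |Y| · det(L_Y) = trace(K) · det(L+I). Moreover, if λ₁,…,λₙ are the eigenvalues of L, then trace(K) = Σᵢ λᵢ/(λᵢ+1). -/

import Mathlib

open Matrix BigOperators

/-- The principal submatrix of `M` indexed by the subset `S`. -/
def principalSubmatrix {n : ℕ} (M : Matrix (Fin n) (Fin n) ℝ) (S : Finset (Fin n)) :
    Matrix {i // i ∈ S} {i // i ∈ S} ℝ :=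
  M.submatrix (fun i => (i : Fin n)) (fun i => (i : Fin n))

lemma det_mixed {n : ℕ} (M : Matrix (Fin n) (Fin n) ℝ) (Y : Finset (Fin n)) :
    (Matrix.of fun i j => if i ∈ Y then M i j else (Pi.single i 1 : Fin n → ℝ) j).det
      = (principalSubmatrix M Y).det := by
  classical
  set N : Matrix (Fin n) (Fin n) ℝ :=
    Matrix.of fun i j => if i ∈ Y then M i j else (Pi.single i 1 : Fin n → ℝ) j with hN
  have e := Equiv.sumCompl (fun i : Fin n => i ∈ Y)
  have hblock : N.submatrix (Equiv.sumCompl (fun i : Fin n => i ∈ Y))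
      (Equiv.sumCompl (fun i : Fin n => i ∈ Y)) =
      Matrix.fromBlocks (principalSubmatrix M Y)
        (Matrix.of fun (i : {i // i ∈ Y}) (j : {j // ¬ j ∈ Y}) => M i j) 0 1 := by
    ext i j
    rcases i with i | i <;> rcases j with j | j <;>
      simp [hN, principalSubmatrix, Matrix.fromBlocks, i.2, j.2, Pi.single_apply, Matrix.one_apply, Subtype.ext_iff] <;>
      aesop
  calc N.det = (N.submatrix (Equiv.sumCompl (fun i : Fin n => i ∈ Y))
      (Equiv.sumCompl (fun i : Fin n => i ∈ Y))).det :=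
        (Matrix.det_submatrix_equiv_self _ _).symm
    _ = (principalSubmatrix M Y).det := by
        rw [hblock, Matrix.det_fromBlocks_zero₂₁, Matrix.det_one, mul_one]

def boolEquiv (n : ℕ) : Finset (Fin n) ≃ (Fin n → Bool) where
  toFun Y i := i ∈ Y
  invFun r := Finset.univ.filter (fun i => r i)
  left_inv Y := by ext i; simp
  right_inv r := by funext i; simp

lemma det_one_add_expand {n : ℕ} (M : Matrix (Fin n) (Fin n) ℝ) :
    (1 + M).det = ∑ Y : Finset (Fin n), (principalSubmatrix M Y).det := by
  classical
  have hrow : (1 + M) = Matrix.of fun i => ∑ b : Bool,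
      (if b then M i else (Pi.single i 1 : Fin n → ℝ)) := by
    ext i j
    simp [Fintype.sum_bool, Matrix.one_apply, Pi.single_apply, add_comm, eq_comm]
  rw [hrow]
  have := (Matrix.detRowAlternating (R := ℝ) (n := Fin n)).toMultilinearMap.map_sum
    (g := fun i (b : Bool) => if b then M i else (Pi.single i 1 : Fin n → ℝ))
  have hdet : (Matrix.of fun i => ∑ b : Bool,
      (if b then M i else (Pi.single i 1 : Fin n → ℝ))).det
      = ∑ r : Fin n → Bool, (Matrix.of fun i =>
          if r i then M i else (Pi.single i 1 : Fin n → ℝ)).det := by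
    exact this
  rw [hdet]
  refine (Fintype.sum_equiv (boolEquiv n) _ _ ?_).symm
  intro Y
  have : (Matrix.of fun i => if boolEquiv n Y i then M i else (Pi.single i 1 : Fin n → ℝ))
      = Matrix.of fun i j => if i ∈ Y then M i j else (Pi.single i 1 : Fin n → ℝ) j := by
    ext i j
    simp only [Matrix.of_apply, boolEquiv, Equiv.coe_fn_mk, decide_eq_true_eq]
    split <;> rfl
  rw [this, det_mixed]

lemma sum_not_mem_det {n : ℕ} (M : Matrix (Fin n) (Fin n) ℝ) (i : Fin n) :
    ∑ Y : Finset (Fin n), (if i ∈ Y then (0:ℝ) else (principalSubmatrix M Y).det)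
      = (Matrix.adjugate (1 + M)) i i := by
  classical
  have h1 := det_one_add_expand (M.updateRow i 0)
  have h2 : ∀ Y : Finset (Fin n), (principalSubmatrix (M.updateRow i 0) Y).det
      = if i ∈ Y then (0:ℝ) else (principalSubmatrix M Y).det := by
    intro Y
    by_cases hi : i ∈ Y
    · rw [if_pos hi]
      refine Matrix.det_eq_zero_of_row_eq_zero ⟨i, hi⟩ (fun j => ?_)
      simp [principalSubmatrix, Matrix.updateRow_self]
    · rw [if_neg hi]
      congr 1
      ext a b
      have hai : (a : Fin n) ≠ i := fun h => hi (h ▸ a.2)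
      simp [principalSubmatrix, Matrix.updateRow_ne hai]
  have h3 : (1 + M.updateRow i 0) = (1 + M).updateRow i (Pi.single i 1) := by
    ext a b
    by_cases ha : a = i
    · subst ha
      simp [Matrix.updateRow_self, Matrix.one_apply, Pi.single_apply, eq_comm]
    · simp [Matrix.updateRow_ne ha]
  rw [h3] at h1
  rw [← Finset.sum_congr rfl (fun Y _ => h2 Y), ← h1, Matrix.adjugate_apply]

lemma trace_part {n : ℕ} (L : Matrix (Fin n) (Fin n) ℝ) (hL : L.PosSemidef) :
    (L * (L + 1)⁻¹).trace
        = ∑ i, hL.1.eigenvalues i / (hL.1.eigenvalues i + 1) := by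
  classical
  set hH := hL.1
  set U : Matrix (Fin n) (Fin n) ℝ := ↑(hH.eigenvectorUnitary) with hU
  set lam := hH.eigenvalues with hlam
  have hUU : U * star U = 1 := (Matrix.mem_unitaryGroup_iff).mp hH.eigenvectorUnitary.2
  have hUU' : star U * U = 1 := (Matrix.mem_unitaryGroup_iff').mp hH.eigenvectorUnitary.2
  have hspec : L = U * Matrix.diagonal lam * star U := by
    have := hH.spectral_theorem
    simpa using this
  have hpos : ∀ i, 0 < lam i + 1 := fun i =>
    by have := hL.eigenvalues_nonneg i; linarith
  have hone : Matrix.diagonal (fun i => (lam i + 1) * (lam i + 1)⁻¹)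
      = (1 : Matrix (Fin n) (Fin n) ℝ) := by
    rw [show (fun i => (lam i + 1) * (lam i + 1)⁻¹) = (fun _ => (1:ℝ)) from
      funext fun i => mul_inv_cancel₀ (hpos i).ne', Matrix.diagonal_one]
  have hL1 : L + 1 = U * Matrix.diagonal (fun i => lam i + 1) * star U := by
    have : (Matrix.diagonal (fun i => lam i + 1)) = Matrix.diagonal lam + 1 := by
      rw [← Matrix.diagonal_one, Matrix.diagonal_add]
    rw [this, Matrix.mul_add, Matrix.add_mul, Matrix.mul_one, hUU, ← hspec]
  have hinv : (L + 1)⁻¹ = U * Matrix.diagonal (fun i => (lam i + 1)⁻¹) * star U := by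
    apply Matrix.inv_eq_right_inv
    rw [hL1]
    calc U * Matrix.diagonal (fun i => lam i + 1) * star U *
          (U * Matrix.diagonal (fun i => (lam i + 1)⁻¹) * star U)
        = U * Matrix.diagonal (fun i => lam i + 1) * (star U * U) *
            Matrix.diagonal (fun i => (lam i + 1)⁻¹) * star U := by
          noncomm_ring
      _ = 1 := by
          rw [hUU', Matrix.mul_one, Matrix.mul_assoc U, Matrix.diagonal_mul_diagonal,
            hone, Matrix.mul_one, hUU]
  have hprod : L * (L + 1)⁻¹
      = U * Matrix.diagonal (fun i => lam i * (lam i + 1)⁻¹) * star U := by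
    rw [hinv]
    nth_rewrite 1 [hspec]
    calc U * Matrix.diagonal lam * star U *
          (U * Matrix.diagonal (fun i => (lam i + 1)⁻¹) * star U)
        = U * Matrix.diagonal lam * (star U * U) *
            Matrix.diagonal (fun i => (lam i + 1)⁻¹) * star U := by noncomm_ring
      _ = _ := by
          rw [hUU', Matrix.mul_one, Matrix.mul_assoc U, Matrix.diagonal_mul_diagonal]
  rw [hprod, Matrix.trace_mul_cycle, hUU', Matrix.one_mul, Matrix.trace_diagonal]
  simp [div_eq_mul_inv]


/-- The expected cardinality of a subset drawn from the L-ensemble with kernel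
`L` equals `trace K` where `K = L (L + I)⁻¹`:
`Σ_Y |Y| det(L_Y) = trace(K) · det(L + I)`, and moreover
`trace(K) = Σᵢ λᵢ / (λᵢ + 1)` where the `λᵢ` are the eigenvalues of `L`. -/
theorem expected_cardinality_eq_trace {n : ℕ} (L : Matrix (Fin n) (Fin n) ℝ)
    (hL : L.PosSemidef) :
    (∑ Y : Finset (Fin n), (Y.card : ℝ) * (principalSubmatrix L Y).det
        = (L * (L + 1)⁻¹).trace * (L + 1).det) ∧
      (L * (L + 1)⁻¹).trace
        = ∑ i, hL.1.eigenvalues i / (hL.1.eigenvalues i + 1) := by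
  classical
  refine ⟨?_, trace_part L hL⟩
  have hA : (L + 1).PosDef := Matrix.PosDef.posSemidef_add hL Matrix.PosDef.one
  have hdet : (L + 1).det ≠ 0 := hA.det_pos.ne'
  have hL1 : (1 : Matrix (Fin n) (Fin n) ℝ) + L = L + 1 := add_comm _ _
  -- LHS computation
  have step1 : ∀ Y : Finset (Fin n), (Y.card : ℝ) * (principalSubmatrix L Y).det
      = ∑ i : Fin n, (if i ∈ Y then (principalSubmatrix L Y).det else 0) := by
    intro Y
    rw [Finset.sum_ite_mem, Finset.univ_inter, Finset.sum_const, nsmul_eq_mul]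
  have step2 : ∀ i : Fin n,
      ∑ Y : Finset (Fin n), (if i ∈ Y then (principalSubmatrix L Y).det else 0)
        = (L + 1).det - Matrix.adjugate (L + 1) i i := by
    intro i
    have split : ∀ Y : Finset (Fin n),
        (if i ∈ Y then (principalSubmatrix L Y).det else 0)
          = (principalSubmatrix L Y).det
              - (if i ∈ Y then (0:ℝ) else (principalSubmatrix L Y).det) := by
      intro Y; by_cases h : i ∈ Y <;> simp [h]
    rw [Finset.sum_congr rfl (fun Y _ => split Y), Finset.sum_sub_distrib,
      sum_not_mem_det L i, ← det_one_add_expand L, hL1]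
  have lhs_eq : ∑ Y : Finset (Fin n), (Y.card : ℝ) * (principalSubmatrix L Y).det
      = (n : ℝ) * (L + 1).det - (Matrix.adjugate (L + 1)).trace := by
    rw [Finset.sum_congr rfl (fun Y _ => step1 Y), Finset.sum_comm,
      Finset.sum_congr rfl (fun i _ => step2 i), Finset.sum_sub_distrib,
      Finset.sum_const, Finset.card_univ, Fintype.card_fin, nsmul_eq_mul]
    rfl
  -- RHS computation
  have hadj : Matrix.adjugate (L + 1) = (L + 1).det • (L + 1)⁻¹ := by
    rw [Matrix.inv_def, smul_smul, Ring.inverse_eq_inv', mul_inv_cancel₀ hdet, one_smul]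
  have hmul : L * (L + 1)⁻¹ = 1 - (L + 1)⁻¹ := by
    have h1 : (L + 1) * (L + 1)⁻¹ = 1 := Matrix.mul_nonsing_inv _ hdet.isUnit
    calc L * (L + 1)⁻¹ = ((L + 1) - 1) * (L + 1)⁻¹ := by rw [add_sub_cancel_right]
      _ = (L + 1) * (L + 1)⁻¹ - 1 * (L + 1)⁻¹ := Matrix.sub_mul _ _ _
      _ = 1 - (L + 1)⁻¹ := by rw [h1, Matrix.one_mul]
  rw [lhs_eq, hmul, Matrix.trace_sub, Matrix.trace_one]
  have htr : (Matrix.adjugate (L + 1)).trace = (L + 1).det * ((L + 1)⁻¹).trace := by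
    rw [hadj, Matrix.trace_smul, smul_eq_mul]
  rw [htr]
  simp only [Fintype.card_fin]
  ring
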